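/- Suppose A and B are symmetric Latin squares of order n that are paratopic. Then A and B are isotopic. Moreover, if A and B are not rrs-isotopic, then n is even and each of A and B possesses an autotopism of the form (θ, θ⁻¹, ε) in which θ is a permutation of {1,…,n} of prime order p that has no fixed points and all of whose cycles have length p. -/

import Mathlib

/-- A Latin square of order `n`: each row and each column is a bijection. -/
def IsLatin {n : ℕ} (L : Fin n → Fin n → Fin n) : Prop :=
  (∀ i, Function.Bijective (L i)) ∧ (∀ j, Function.Bijective fun i => L i j)

/-- `L` is symmetric: `L(i,j) = L(j,i)`. -/
def IsSymmetric {n : ℕ} (L : Fin n → Fin n → Fin n) : Prop :=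
  ∀ i j, L i j = L j i

/-- `L` is semisymmetric: `L(i,j) = k → L(j,k) = i`. -/
def IsSemisymmetric {n : ℕ} (L : Fin n → Fin n → Fin n) : Prop :=
  ∀ i j, L j (L i j) = i

/-- Totally symmetric: symmetric and semisymmetric. -/
def IsTotallySymmetric {n : ℕ} (L : Fin n → Fin n → Fin n) : Prop :=
  IsSymmetric L ∧ IsSemisymmetric L

/-- Reduced: the first row and first column are in natural order. -/
def IsReducedLS {n : ℕ} (L : Fin n → Fin n → Fin n) : Prop :=
  ∀ i j : Fin n, ((i : ℕ) = 0 → L i j = j) ∧ ((j : ℕ) = 0 → L i j = i)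

/-- Idempotent: `L(i,i) = i` for all `i`. -/
def IsIdempotent {n : ℕ} (L : Fin n → Fin n → Fin n) : Prop :=
  ∀ i, L i i = i

/-- Unipotent: all diagonal entries are equal. -/
def IsUnipotent {n : ℕ} (L : Fin n → Fin n → Fin n) : Prop :=
  ∀ i j, L i i = L j j

/-- `B` is isotopic to `A`: `B = A(α,β,γ)`. -/
def Isotopic {n : ℕ} (A B : Fin n → Fin n → Fin n) : Prop :=
  ∃ α β γ : Equiv.Perm (Fin n), ∀ i j, B (α i) (β j) = γ (A i j)

/-- `B` is rrs-isotopic to `A`: `B = A(α,α,γ)`. -/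
def RrsIsotopic {n : ℕ} (A B : Fin n → Fin n → Fin n) : Prop :=
  ∃ α γ : Equiv.Perm (Fin n), ∀ i j, B (α i) (α j) = γ (A i j)

/-- `B` is isomorphic to `A`: `B = A(α,α,α)`. -/
def Isomorphic {n : ℕ} (A B : Fin n → Fin n → Fin n) : Prop :=
  ∃ α : Equiv.Perm (Fin n), ∀ i j, B (α i) (α j) = α (A i j)

/-- `B` is one of the six conjugates of `A`, obtained by uniformly permuting
the coordinates of the triples `(i, j, A i j)`. -/
def IsConjugate {n : ℕ} (A B : Fin n → Fin n → Fin n) : Prop :=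
  (∀ i j, B i j = A i j) ∨ (∀ i j, B j i = A i j) ∨
  (∀ i j, B (A i j) j = i) ∨ (∀ i j, B i (A i j) = j) ∨
  (∀ i j, B j (A i j) = i) ∨ (∀ i j, B (A i j) i = j)

/-- `B` is paratopic to `A`: `B` is isotopic to some conjugate of `A`. -/
def Paratopic {n : ℕ} (A B : Fin n → Fin n → Fin n) : Prop :=
  ∃ C : Fin n → Fin n → Fin n, IsConjugate A C ∧ Isotopic C B

/-- `L` possesses an autotopism `(θ, θ⁻¹, ε)` where `θ` is a fixed-point-free
permutation of prime order `p` all of whose cycles have length `p`. -/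
def HasSemiregularPrincipalAutotopism {n : ℕ} (L : Fin n → Fin n → Fin n) : Prop :=
  ∃ θ : Equiv.Perm (Fin n), ∃ p : ℕ, p.Prime ∧ orderOf θ = p ∧
    (∀ x, θ x ≠ x) ∧ (∀ x, (θ.cycleOf x).support.card = p) ∧
    (∀ i j, L (θ i) (θ⁻¹ j) = L i j)

/-- Powers of an autotopism of the form `(σ, σ⁻¹, ε)` are again autotopisms. -/
lemma auto_pow {n : ℕ} {L : Fin n → Fin n → Fin n} {σ : Equiv.Perm (Fin n)}
    (h : ∀ i j, L (σ i) (σ⁻¹ j) = L i j) :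
    ∀ (k : ℕ) (i j : Fin n), L ((σ ^ k) i) ((σ ^ k)⁻¹ j) = L i j := by
  intro k
  induction k with
  | zero => intro i j; simp
  | succ k ih =>
    intro i j
    have h1 : (σ ^ (k + 1)) i = σ ((σ ^ k) i) := by
      rw [pow_succ']; rfl
    have h2 : (σ ^ (k + 1))⁻¹ j = σ⁻¹ ((σ ^ k)⁻¹ j) := by
      rw [pow_succ, mul_inv_rev]; rfl
    rw [h1, h2, h ((σ ^ k) i) ((σ ^ k)⁻¹ j), ih]

/-- Key lemma: if `B(α(A i j), β j) = γ i` for symmetric `A`, `B`, then `A` and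
`B` are isotopic. -/
lemma key_isotopic {n : ℕ} {A B : Fin n → Fin n → Fin n}
    (hA : IsLatin A) (hAs : IsSymmetric A) (hBs : IsSymmetric B)
    (α β γ : Equiv.Perm (Fin n))
    (H : ∀ i j, B (α (A i j)) (β j) = γ i) : Isotopic A B := by
  set δ : Equiv.Perm (Fin n) := β⁻¹ * α with hδ
  have hδap : ∀ x, δ x = β⁻¹ (α x) := fun x => rfl
  have hδinv : ∀ x, δ⁻¹ x = α⁻¹ (β x) := by
    intro x; rw [hδ, mul_inv_rev, inv_inv]; rfl
  have star : ∀ i j, A i (δ (A i j)) = δ⁻¹ j := by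
    intro i j
    obtain ⟨i', hi'⟩ := (hA.2 (β⁻¹ (α (A i j)))).surjective (α⁻¹ (β j))
    have hi'' : A i' (β⁻¹ (α (A i j))) = α⁻¹ (β j) := hi'
    have h2 := H i' (β⁻¹ (α (A i j)))
    rw [hi'', (by exact α.apply_symm_apply (β j) : α (α⁻¹ (β j)) = β j),
      (by exact β.apply_symm_apply (α (A i j)) : β (β⁻¹ (α (A i j))) = α (A i j))] at h2
    rw [hBs, H i j] at h2
    have hii : i = i' := γ.injective h2
    rw [hδap, hδinv]
    rw [← hii] at hi''
    exact hi''
  refine ⟨α * δ⁻¹, β, γ * δ, fun i j => ?_⟩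
  have h0 : A (δ (A i j)) j = δ⁻¹ i := by
    rw [hAs (δ (A i j)) j, hAs i j]
    exact star j i
  have h1 := H (δ (A i j)) j
  rw [h0] at h1
  exact h1

/-- From an autotopism `(σ, σ⁻¹, ε)` of even order, produce the semiregular
principal autotopism and the parity of `n`. -/
lemma mk_hspa {n : ℕ} {L : Fin n → Fin n → Fin n} (hL : IsLatin L)
    {σ : Equiv.Perm (Fin n)}
    (hauto : ∀ i j, L (σ i) (σ⁻¹ j) = L i j)
    (heven : Even (orderOf σ)) :
    HasSemiregularPrincipalAutotopism L ∧ Even n := by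
  obtain ⟨t, ht⟩ := heven
  have hmpos : 0 < orderOf σ := orderOf_pos σ
  have htpos : 0 < t := by omega
  set φ : Equiv.Perm (Fin n) := σ ^ t with hφ
  have hord : orderOf φ = 2 := by
    rw [hφ, orderOf_pow, ht]
    have h2t : t + t = 2 * t := by ring
    rw [h2t, Nat.gcd_eq_right (dvd_mul_left t 2)]
    exact Nat.mul_div_cancel 2 htpos
  have hautoφ : ∀ i j, L (φ i) (φ⁻¹ j) = L i j := auto_pow hauto t
  have hfpf : ∀ x, φ x ≠ x := by
    intro x hx
    have hid : ∀ j, φ⁻¹ j = j := by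
      intro j
      have h1 := hautoφ x j
      rw [hx] at h1
      exact (hL.1 x).injective h1
    have hφ1 : φ = 1 := by
      have : φ⁻¹ = 1 := Equiv.ext hid
      simpa using congrArg Inv.inv this
    rw [hφ1, orderOf_one] at hord
    omega
  have zcase : ∀ k : ℤ, φ ^ k = 1 ∨ φ ^ k = φ := by
    intro k
    have hz := zpow_mod_orderOf φ k
    rw [hord] at hz
    have h2 : ((2 : ℕ) : ℤ) = 2 := by norm_num
    rw [h2] at hz
    rcases Int.emod_two_eq_zero_or_one k with h | h
    · left; rw [← hz, h, zpow_zero]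
    · right; rw [← hz, h, zpow_one]
  have hcyc : ∀ x, (φ.cycleOf x).support.card = 2 := by
    intro x
    have hsupp : (φ.cycleOf x).support = {x, φ x} := by
      ext y
      rw [Equiv.Perm.mem_support_cycleOf_iff]
      constructor
      · rintro ⟨⟨k, hk⟩, -⟩
        rcases zcase k with h | h
        · rw [h] at hk
          simp only [Equiv.Perm.one_apply] at hk
          simp [← hk]
        · rw [h] at hk
          simp [← hk]
      · intro hy
        rcases Finset.mem_insert.1 hy with h | h
        · exact ⟨⟨0, by simp [h]⟩, Equiv.Perm.mem_support.2 (hfpf x)⟩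
        · rw [Finset.mem_singleton] at h
          exact ⟨⟨1, by simp [h]⟩, Equiv.Perm.mem_support.2 (hfpf x)⟩
    rw [hsupp]
    exact Finset.card_pair (fun h => hfpf x h.symm)
  have hEven : Even n := by
    have huniv : φ.support = Finset.univ :=
      Finset.eq_univ_iff_forall.2 fun x => Equiv.Perm.mem_support.2 (hfpf x)
    have hsum : φ.cycleType.sum = n := by
      rw [Equiv.Perm.sum_cycleType, huniv, Finset.card_univ, Fintype.card_fin]
    have hdvd : 2 ∣ φ.cycleType.sum := by
      apply Multiset.dvd_sum
      intro m hm
      have h1 : m ∣ 2 := by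
        rw [← hord, ← Equiv.Perm.lcm_cycleType]
        exact Multiset.dvd_lcm hm
      have h2 := Equiv.Perm.two_le_of_mem_cycleType hm
      have h3 : m ≤ 2 := Nat.le_of_dvd (by norm_num) h1
      have : m = 2 := by omega
      omega
    rw [hsum] at hdvd
    obtain ⟨c, hc⟩ := hdvd
    exact ⟨c, by omega⟩
  exact ⟨⟨φ, 2, Nat.prime_two, hord, hfpf, hcyc, hautoφ⟩, hEven⟩

theorem stmt5 {n : ℕ} (A B : Fin n → Fin n → Fin n)
    (hA : IsLatin A) (hAs : IsSymmetric A)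
    (hB : IsLatin B) (hBs : IsSymmetric B)
    (hpar : Paratopic A B) :
    Isotopic A B ∧ (¬ RrsIsotopic A B → Even n ∧
      HasSemiregularPrincipalAutotopism A ∧ HasSemiregularPrincipalAutotopism B) := by
  obtain ⟨C, hC, hCB⟩ := hpar
  have hiso : Isotopic A B := by
    obtain ⟨α, β, γ, hI⟩ := hCB
    rcases hC with h | h | h | h | h | h
    · exact ⟨α, β, γ, fun i j => by rw [hI, h]⟩
    · exact ⟨α, β, γ, fun i j => by rw [hI, h j i, ← hAs]⟩
    · refine key_isotopic hA hAs hBs α β γ fun i j => ?_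
      have h1 := hI (A i j) j
      rw [h i j] at h1
      exact h1
    · refine key_isotopic hA hAs hBs β α γ fun i j => ?_
      have h1 := hI j (A j i)
      rw [h j i] at h1
      rw [hBs, hAs j i] at h1
      exact h1
    · refine key_isotopic hA hAs hBs β α γ fun i j => ?_
      have h1 := hI j (A i j)
      rw [h i j] at h1
      rw [hBs] at h1
      exact h1
    · refine key_isotopic hA hAs hBs α β γ fun i j => ?_
      have h1 := hI (A j i) j
      rw [h j i] at h1
      rw [hAs j i] at h1
      exact h1
  refine ⟨hiso, fun hnr => ?_⟩
  obtain ⟨α, β, γ, hI⟩ := hiso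
  have hswap : ∀ i j, B (α i) (β j) = B (α j) (β i) := by
    intro i j
    rw [hI, hI, hAs]
  set σ : Equiv.Perm (Fin n) := α⁻¹ * β with hσ
  have hautoA : ∀ i j, A (σ i) (σ⁻¹ j) = A i j := by
    intro i j
    apply γ.injective
    rw [← hI (σ i) (σ⁻¹ j), ← hI i j]
    have e1 : α (σ i) = β i := by
      rw [hσ]; exact α.apply_symm_apply (β i)
    have e2 : β (σ⁻¹ j) = α j := by
      rw [hσ, mul_inv_rev, inv_inv]
      exact β.apply_symm_apply (α j)
    rw [e1, e2, hBs (β i) (α j)]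
    exact hswap j i
  set θ : Equiv.Perm (Fin n) := β * α⁻¹ with hθ
  have hautoB : ∀ i j, B (θ i) (θ⁻¹ j) = B i j := by
    intro i j
    have e1 : θ i = β (α⁻¹ i) := rfl
    have e2 : θ⁻¹ j = α (β⁻¹ j) := by
      rw [hθ, mul_inv_rev, inv_inv]; rfl
    rw [e1, e2, hBs, hswap (β⁻¹ j) (α⁻¹ i), (by exact α.apply_symm_apply i : α (α⁻¹ i) = i),
      (by exact β.apply_symm_apply j : β (β⁻¹ j) = j)]
  have hkey : ¬ Odd (orderOf σ) := by
    intro hodd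
    apply hnr
    obtain ⟨k, hk⟩ := hodd
    refine ⟨α * σ ^ (k + 1), γ, fun i j => ?_⟩
    have hσk : σ ^ (k + 1) * σ ^ (k + 1) = σ := by
      rw [← pow_add]
      have he : (k + 1) + (k + 1) = orderOf σ + 1 := by omega
      rw [he, pow_succ, pow_orderOf_eq_one, one_mul]
    have hfun : α * σ ^ (k + 1) = β * (σ ^ (k + 1))⁻¹ := by
      have hβ : β = α * σ := by rw [hσ]; group
      rw [hβ, mul_assoc]
      congr 1
      exact eq_mul_inv_iff_mul_eq.mpr hσk
    have hfj : (α * σ ^ (k + 1)) j = β ((σ ^ (k + 1))⁻¹ j) := by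
      rw [hfun]; rfl
    rw [hfj]
    have hfi : (α * σ ^ (k + 1)) i = α ((σ ^ (k + 1)) i) := rfl
    rw [hfi, hI, auto_pow hautoA (k + 1)]
  have hordeven : Even (orderOf σ) := (Nat.even_or_odd (orderOf σ)).resolve_right hkey
  have hA2 := mk_hspa hA hautoA hordeven
  have hordθ : orderOf θ = orderOf σ := by
    have hsc : SemiconjBy α σ θ := by
      rw [SemiconjBy, hσ, hθ]; group
    exact (hsc.orderOf_eq α).symm
  have hB2 := mk_hspa hB hautoB (hordθ ▸ hordeven)
  exact ⟨hA2.2, hA2.1, hB2.1⟩
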